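/- Let ρ_d = ∑_{i,j=0}^{d-1} ρ_{ij} |i⟩⟨j| be a d-dimensional density matrix and let ρ_{d×d} = ∑_{i,j=0}^{d-1} ρ_{ij} |ii⟩⟨jj| be the associated maximally correlated state on ℂ^d ⊗ ℂ^d. Then the coherence of formation of ρ_d in the reference basis equals the entanglement of formation of ρ_{d×d}: C_f(ρ_d) = E_f(ρ_{d×d}). -/

import Mathlib

open Matrix BigOperators Kronecker ComplexOrder

/-- Base-2 Shannon entropy of a probability vector, with the convention `0 · log 0 = 0`
(automatic since `Real.logb 2 0 = 0`). -/
noncomputable def shannon2 {n : Type*} [Fintype n] (p : n → ℝ) : ℝ :=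
  -∑ i, p i * Real.logb 2 (p i)

/-- A density matrix: positive semidefinite with unit trace. -/
def IsDensityMatrix {n : Type*} [Fintype n] (ρ : Matrix n n ℂ) : Prop :=
  ρ.PosSemidef ∧ ρ.trace = 1

/-- Von Neumann entropy (base 2): Shannon entropy of the eigenvalues. -/
noncomputable def vN {n : Type*} [Fintype n] [DecidableEq n] (ρ : Matrix n n ℂ) : ℝ :=
  if h : ρ.IsHermitian then shannon2 h.eigenvalues else 0

/-- Relative entropy of coherence `C_r(ρ) = S(Δ(ρ)) - S(ρ)`, where `Δ` is the
diagonal part. -/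
noncomputable def Cr {n : Type*} [Fintype n] [DecidableEq n] (ρ : Matrix n n ℂ) : ℝ :=
  vN (Matrix.diagonal ρ.diag) - vN ρ

/-- Application of a channel given by its Kraus operators: `ρ ↦ ∑ i, K i * ρ * (K i)ᴴ`. -/
noncomputable def krausApply {ι m p : Type*} [Fintype ι] [Fintype m] [Fintype p]
    (K : ι → Matrix p m ℂ) (ρ : Matrix m m ℂ) : Matrix p p ℂ :=
  ∑ i, K i * ρ * (K i)ᴴ

/-- Coherence of formation: infimum over finite pure-state decompositions
`ρ = ∑ i, p i • |ψ i⟩⟨ψ i|` of `∑ i, p i * S(Δ(|ψ i⟩⟨ψ i|))`. -/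
noncomputable def Cf {n : Type*} [Fintype n] (ρ : Matrix n n ℂ) : ℝ :=
  sInf { x : ℝ | ∃ (m : ℕ) (p : Fin m → ℝ) (ψ : Fin m → n → ℂ),
    (∀ i, 0 < p i) ∧ (∑ i, p i = 1) ∧ (∀ i, ∑ j, ‖ψ i j‖ ^ 2 = 1) ∧
    ρ = ∑ i, (p i : ℂ) • Matrix.vecMulVec (ψ i) (star (ψ i)) ∧
    x = ∑ i, p i * shannon2 (fun j => ‖ψ i j‖ ^ 2) }

/-- Entanglement of formation of a bipartite state on `ℂ^{dA} ⊗ ℂ^{dB}`: infimum over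
finite pure-state decompositions of the average entropy of the reduced state
(partial trace over the first factor). -/
noncomputable def Ef {dA dB : Type*} [Fintype dA] [Fintype dB] [DecidableEq dB]
    (ρ : Matrix (dA × dB) (dA × dB) ℂ) : ℝ :=
  sInf { x : ℝ | ∃ (m : ℕ) (p : Fin m → ℝ) (Ψ : Fin m → (dA × dB) → ℂ),
    (∀ k, 0 < p k) ∧ (∑ k, p k = 1) ∧ (∀ k, ∑ j, ‖Ψ k j‖ ^ 2 = 1) ∧
    ρ = ∑ k, (p k : ℂ) • Matrix.vecMulVec (Ψ k) (star (Ψ k)) ∧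
    x = ∑ k, p k * vN (Matrix.of fun j j' : dB => ∑ i, Ψ k (i, j) * star (Ψ k (i, j'))) }

/-- The maximally correlated state `ρ_{d×d} = ∑_{i,j} ρ_{ij} |ii⟩⟨jj|` associated to `ρ`. -/
def mcState {d : ℕ} (ρ : Matrix (Fin d) (Fin d) ℂ) :
    Matrix (Fin d × Fin d) (Fin d × Fin d) ℂ :=
  Matrix.of fun p q => if p.1 = p.2 ∧ q.1 = q.2 then ρ p.1 q.1 else 0


section Aux

open Polynomial

private lemma mul_star_self_c (z : ℂ) : z * star z = ((‖z‖ ^ 2 : ℝ) : ℂ) := by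
  exact_mod_cast Complex.mul_conj' z

private theorem charpoly_diag' {n : Type*} [Fintype n] [DecidableEq n] (v : n → ℂ) :
    (Matrix.diagonal v).charpoly = ∏ i, (X - C (v i)) := by
  have : (Matrix.diagonal v).charmatrix = Matrix.diagonal (fun i => X - C (v i)) := by
    ext i j
    by_cases h : i = j
    · subst h; simp [Matrix.charmatrix_apply_eq]
    · simp [Matrix.charmatrix_apply_ne _ _ _ h, Matrix.diagonal_apply_ne _ h]
  rw [Matrix.charpoly, this, Matrix.det_diagonal]

private theorem charpoly_unitary_conj' {n : Type*} [Fintype n] [DecidableEq n]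
    (U A : Matrix n n ℂ) (h1 : U * star U = 1) :
    (U * A * star U).charpoly = A.charpoly := by
  let f : Matrix n n ℂ →+* Matrix n n ℂ[X] := (Polynomial.C (R := ℂ)).mapMatrix
  have hs : ∀ B : Matrix n n ℂ[X], Matrix.scalar n (X : ℂ[X]) * B = B * Matrix.scalar n X := by
    intro B; ext i j
    simp [Matrix.scalar_apply, Matrix.mul_diagonal, Matrix.diagonal_mul, mul_comm]
  have key : charmatrix (U * A * star U) = f U * charmatrix A * f (star U) := by
    rw [charmatrix, charmatrix, mul_sub, sub_mul]
    congr 1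
    · symm
      rw [← hs, mul_assoc, ← f.map_mul, h1, f.map_one, mul_one]
    · show f (U * A * star U) = _
      rw [f.map_mul, f.map_mul]
  rw [Matrix.charpoly, key, Matrix.det_mul_right_comm, ← f.map_mul, h1, f.map_one,
    one_mul, Matrix.charpoly]

private theorem vN_diagonal' {n : Type*} [Fintype n] [DecidableEq n] (r : n → ℝ) :
    vN (Matrix.diagonal (fun i => (r i : ℂ))) = shannon2 r := by
  have hA : (Matrix.diagonal (fun i => (r i : ℂ))).IsHermitian := by
    have hst : (star fun i => ((r i : ℝ) : ℂ)) = fun i => ((r i : ℝ) : ℂ) :=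
      funext fun i => Complex.conj_ofReal _
    rw [Matrix.IsHermitian, Matrix.diagonal_conjTranspose, hst]
  rw [vN, dif_pos hA]
  have hprod : ∀ (v : n → ℂ), (∏ i, (X - C (v i)))
      = ((Finset.univ.val.map v).map (fun a => X - C a)).prod := by
    intro v
    rw [Finset.prod_eq_multiset_prod, Multiset.map_map]
    rfl
  have hU : (hA.eigenvectorUnitary : Matrix n n ℂ) *
      star (hA.eigenvectorUnitary : Matrix n n ℂ) = 1 :=
    (Matrix.mem_unitaryGroup_iff).mp hA.eigenvectorUnitary.2
  have hc2 : (Matrix.diagonal (fun i => (r i : ℂ))).charpoly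
      = ∏ i, (X - C ((hA.eigenvalues i : ℂ))) := by
    conv_lhs => rw [hA.spectral_theorem, Unitary.conjStarAlgAut_apply]
    rw [charpoly_unitary_conj' _ _ hU, charpoly_diag']
    rfl
  have hmul : (Finset.univ.val.map (fun i => ((hA.eigenvalues i : ℝ) : ℂ)))
      = (Finset.univ.val.map (fun i => ((r i : ℝ) : ℂ))) := by
    have h := (charpoly_diag' (fun i => (r i : ℂ))).symm.trans hc2
    rw [hprod, hprod] at h
    have := congrArg Polynomial.roots h
    rw [Polynomial.roots_multiset_prod_X_sub_C, Polynomial.roots_multiset_prod_X_sub_C] at this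
    exact this.symm
  have hsum := congrArg
    (fun s : Multiset ℂ => (s.map (fun z => z.re * Real.logb 2 z.re)).sum) hmul
  simp only [Multiset.map_map, Function.comp, Complex.ofReal_re] at hsum
  unfold shannon2
  rw [Finset.sum_eq_multiset_sum, Finset.sum_eq_multiset_sum, hsum]

/-- The reduced matrix of a diagonal-supported bipartite vector is diagonal. -/
private theorem reduced_diag {n : Type*} [Fintype n] [DecidableEq n] (psi : n → ℂ) :
    (Matrix.of fun j j' : n =>
        ∑ i, (if i = j then psi i else 0) * star (if i = j' then psi i else 0))
      = Matrix.diagonal (fun j => ((‖psi j‖ ^ 2 : ℝ) : ℂ)) := by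
  ext j j'
  rw [Matrix.of_apply]
  have hterm : ∀ i, (if i = j then psi i else 0) * star (if i = j' then psi i else 0)
      = if i = j ∧ i = j' then ((‖psi i‖ ^ 2 : ℝ) : ℂ) else 0 := by
    intro i
    by_cases h1 : i = j
    · subst h1
      by_cases h2 : i = j'
      · subst h2
        rw [if_pos (⟨rfl, rfl⟩ : i = i ∧ i = i), if_pos rfl]
        exact mul_star_self_c _
      · simp [h2]
    · simp [h1]
  simp only [hterm]
  by_cases h : j = j'
  · subst h
    simp [and_self, Finset.sum_ite_eq']
  · rw [Matrix.diagonal_apply_ne _ h]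
    apply Finset.sum_eq_zero
    intro i _
    rw [if_neg]
    rintro ⟨rfl, rfl⟩
    exact h rfl

end Aux

/-- **Lemma 1.** The coherence of formation of `ρ_d` equals the entanglement of formation
of the associated maximally correlated state `ρ_{d×d}`. -/
theorem Cf_eq_Ef_mcState (d : ℕ)
    (ρ : Matrix (Fin d) (Fin d) ℂ) (hρ : IsDensityMatrix ρ) :
    Cf ρ = Ef (mcState ρ) := by
  unfold Cf Ef
  congr 1
  ext x
  constructor
  · rintro ⟨m, p, ψ, hp, hp1, hψ, hdec, hx⟩
    have hdec' : ∀ i i', ρ i i' = ∑ k, (p k : ℂ) * (ψ k i * star (ψ k i')) := by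
      intro i i'
      rw [hdec]
      simp [Matrix.sum_apply, Matrix.vecMulVec_apply]
    refine ⟨m, p, fun k q => if q.1 = q.2 then ψ k q.1 else 0, hp, hp1, ?_, ?_, ?_⟩
    · intro k
      rw [Fintype.sum_prod_type]
      have : ∀ i j : Fin d, ‖if i = j then ψ k i else 0‖ ^ 2
          = if i = j then ‖ψ k i‖ ^ 2 else 0 := by
        intro i j; split <;> simp
      simp only [this, Finset.sum_ite_eq, Finset.mem_univ, if_true]
      exact hψ k
    · ext ⟨i, j⟩ ⟨i', j'⟩
      simp only [mcState, Matrix.of_apply, Matrix.sum_apply, Matrix.smul_apply,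
        Matrix.vecMulVec_apply, Pi.star_apply, smul_eq_mul]
      by_cases h1 : i = j
      · by_cases h2 : i' = j'
        · subst h1; subst h2
          rw [if_pos ⟨rfl, rfl⟩, hdec' i i']
          simp
        · simp [h1, h2]
      · simp [h1]
    · rw [hx]
      congr 1
      funext k
      congr 1
      rw [show (Matrix.of fun j j' : Fin d =>
          ∑ i, (if i = j then ψ k i else 0) * star (if i = j' then ψ k i else 0))
        = Matrix.diagonal (fun j => ((‖ψ k j‖ ^ 2 : ℝ) : ℂ)) from reduced_diag (ψ k),
        vN_diagonal']
  · rintro ⟨m, p, Ψ, hp, hp1, hΨ, hdec, hx⟩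
    have hdec' : ∀ a b : Fin d × Fin d,
        mcState ρ a b = ∑ k, (p k : ℂ) * (Ψ k a * star (Ψ k b)) := by
      intro a b
      rw [hdec]
      simp [Matrix.sum_apply, Matrix.vecMulVec_apply]
    have hoff : ∀ k (i j : Fin d), i ≠ j → Ψ k (i, j) = 0 := by
      intro k i j hij
      have h0 : (0 : ℂ) = ∑ k, (p k : ℂ) * (Ψ k (i, j) * star (Ψ k (i, j))) := by
        rw [← hdec' (i, j) (i, j)]
        simp [mcState, hij]
      have h0' : (0 : ℝ) = ∑ k, p k * ‖Ψ k (i, j)‖ ^ 2 := by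
        have : ∑ k, (p k : ℂ) * (Ψ k (i, j) * star (Ψ k (i, j)))
            = ((∑ k, p k * ‖Ψ k (i, j)‖ ^ 2 : ℝ) : ℂ) := by
          push_cast
          exact Finset.sum_congr rfl fun k _ => by rw [mul_star_self_c]; push_cast; ring
        rw [this] at h0
        exact_mod_cast h0
      have hz := (Finset.sum_eq_zero_iff_of_nonneg
        (fun k _ => mul_nonneg (le_of_lt (hp k)) (by positivity) : ∀ k ∈ Finset.univ, 0 ≤ p k * ‖Ψ k (i, j)‖ ^ 2)).mp h0'.symm
      have hkz := hz k (Finset.mem_univ k)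
      have hn : ‖Ψ k (i, j)‖ ^ 2 = 0 := by
        rcases mul_eq_zero.mp hkz with h | h
        · exact absurd h (ne_of_gt (hp k))
        · exact h
      have hn' : ‖Ψ k (i, j)‖ = 0 := by
        have := sq_eq_zero_iff.mp hn
        exact this
      exact norm_eq_zero.mp hn' 
    refine ⟨m, p, fun k i => Ψ k (i, i), hp, hp1, ?_, ?_, ?_⟩
    · intro k
      have h1 := hΨ k
      rw [Fintype.sum_prod_type] at h1
      rw [← h1]
      apply Finset.sum_congr rfl
      intro i _
      symm
      apply Finset.sum_eq_single i
      · intro j _ hji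
        rw [hoff k i j (fun h => hji h.symm)]
        simp
      · intro hi
        exact absurd (Finset.mem_univ i) hi
    · ext i i'
      have hmc : ρ i i' = mcState ρ (i, i) (i', i') := by simp [mcState]
      rw [hmc, hdec' (i, i) (i', i')]
      simp [Matrix.sum_apply, Matrix.vecMulVec_apply]
    · rw [hx]
      apply Finset.sum_congr rfl
      intro k _
      congr 1
      have hmat : (Matrix.of fun j j' : Fin d => ∑ i, Ψ k (i, j) * star (Ψ k (i, j')))
          = Matrix.of fun j j' : Fin d =>
              ∑ i, (if i = j then Ψ k (i, i) else 0) * star (if i = j' then Ψ k (i, i) else 0) := by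
        ext j j'
        simp only [Matrix.of_apply]
        apply Finset.sum_congr rfl
        intro i _
        have e1 : Ψ k (i, j) = if i = j then Ψ k (i, i) else 0 := by
          by_cases h : i = j
          · subst h; simp
          · rw [hoff k i j h, if_neg h]
        have e2 : Ψ k (i, j') = if i = j' then Ψ k (i, i) else 0 := by
          by_cases h : i = j'
          · subst h; simp
          · rw [hoff k i j' h, if_neg h]
        rw [e1, e2]
      rw [hmat, reduced_diag, vN_diagonal']
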